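/- Fix κ̃ with 0 < κ̃ ≤ 1/π. For β > 0 set κ = κ̃/β and let m(β) = inf over J of F_{β,κ}. Then for every n ∈ ℕ, β^{−n} · ( m(β) − (1/β)·[ (1 − √(1 − 4κ̃²))/4 − (κ̃/2)·arcsin(2κ̃) ] ) → 0 as β → 0⁺. -/

import Mathlib

open MeasureTheory Real Set Filter Topology

noncomputable section

/-- The admissible class `J`: `φ` is absolutely continuous on `[0,1]` with `φ 0 = 0`
and derivative `g` belonging to `L²((0,1))` (equivalently, `φ x = ∫₀ˣ g` on `[0,1]`
with `g` and `g²` integrable on `(0,1)`). -/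
def MemJ (φ g : ℝ → ℝ) : Prop :=
  (∀ x ∈ Icc (0:ℝ) 1, φ x = ∫ t in (0:ℝ)..x, g t) ∧
  IntervalIntegrable g volume 0 1 ∧
  IntervalIntegrable (fun t => (g t) ^ 2) volume 0 1

/-- The functional `F_{β,κ}(φ) = (1/8)∫₀¹ (φ'² + β⁻² sin² φ) − (κ/2)∫₀¹ φ'`,
written in terms of `φ` and its derivative `g`. -/
def Fenergy (β κ : ℝ) (φ g : ℝ → ℝ) : ℝ :=
  (1 / 8) * (∫ x in (0:ℝ)..1, ((g x) ^ 2 + (1 / β ^ 2) * Real.sin (φ x) ^ 2)) -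
    (κ / 2) * (∫ x in (0:ℝ)..1, g x)

/-- `(φ, g)` minimizes `F_{β,κ}` over the class `J`. -/
def IsMinJ (β κ : ℝ) (φ g : ℝ → ℝ) : Prop :=
  MemJ φ g ∧ ∀ ψ h : ℝ → ℝ, MemJ ψ h → Fenergy β κ φ g ≤ Fenergy β κ ψ h

/-- The infimum of `F_{β,κ}` over the class `J`. -/
def minF (β κ : ℝ) : ℝ :=
  sInf {E : ℝ | ∃ φ g : ℝ → ℝ, MemJ φ g ∧ Fenergy β κ φ g = E}


open intervalIntegral

/-- signed absolute sine -/
def msin (t : ℝ) : ℝ := if 0 ≤ t then |Real.sin t| else -|Real.sin t|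

lemma continuous_msin : Continuous msin := by
  refine Continuous.if_le ?_ ?_ continuous_const continuous_id ?_
  · exact continuous_sin.abs
  · exact continuous_sin.abs.neg
  · intro x hx; simp [← hx]

lemma msin_eq_abs {t : ℝ} (h : 0 ≤ t) : msin t = |Real.sin t| := if_pos h

lemma msin_eq_neg_abs {t : ℝ} (h : t < 0) : msin t = -|Real.sin t| := if_neg (not_le.2 h)

lemma abs_msin_le (t : ℝ) : |msin t| ≤ |Real.sin t| := by
  unfold msin; split <;> simp

lemma sin_lip (a b : ℝ) : |Real.sin a - Real.sin b| ≤ |a - b| := by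
  rw [Real.sin_sub_sin]
  have h1 : |Real.sin ((a - b) / 2)| ≤ |(a - b) / 2| := Real.abs_sin_le_abs
  have h2 : |Real.cos ((a + b) / 2)| ≤ 1 := Real.abs_cos_le_one _
  have e1 : |2 * Real.sin ((a - b) / 2) * Real.cos ((a + b) / 2)|
      = 2 * |Real.sin ((a - b) / 2)| * |Real.cos ((a + b) / 2)| := by
    rw [abs_mul, abs_mul]; norm_num
  rw [e1]
  have h3 : (0:ℝ) ≤ 2 * |Real.sin ((a - b) / 2)| := by positivity
  have h4 : 2 * |Real.sin ((a - b) / 2)| * |Real.cos ((a + b) / 2)| ≤ 2 * |(a-b)/2| * 1 :=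
    mul_le_mul (by linarith) h2 (abs_nonneg _) (by positivity)
  have h5 : |(a-b)/2| = |a-b|/2 := by rw [abs_div]; norm_num
  rw [h5] at h4; linarith

lemma msin_lip (a b : ℝ) : |msin a - msin b| ≤ |a - b| := by
  unfold msin
  rcases le_or_gt 0 a with ha | ha <;> rcases le_or_gt 0 b with hb | hb
  · simp only [if_pos ha, if_pos hb]
    exact le_trans (abs_abs_sub_abs_le_abs_sub _ _) (sin_lip a b)
  · simp only [if_pos ha, if_neg (not_le.2 hb)]
    have h1 : |Real.sin a| ≤ |a| := Real.abs_sin_le_abs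
    have h2 : |Real.sin b| ≤ |b| := Real.abs_sin_le_abs
    have hs1 : (0:ℝ) ≤ |Real.sin a| := abs_nonneg _
    have hs2 : (0:ℝ) ≤ |Real.sin b| := abs_nonneg _
    rw [sub_neg_eq_add, abs_of_nonneg (by linarith)]
    rw [abs_of_nonneg ha] at h1
    rw [abs_of_neg hb] at h2
    rw [abs_of_nonneg (by linarith : (0:ℝ) ≤ a - b)]
    linarith
  · simp only [if_neg (not_le.2 ha), if_pos hb]
    have h1 : |Real.sin a| ≤ |a| := Real.abs_sin_le_abs
    have h2 : |Real.sin b| ≤ |b| := Real.abs_sin_le_abs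
    rw [abs_of_neg ha] at h1
    rw [abs_of_nonneg hb] at h2
    have hs1 : (0:ℝ) ≤ |Real.sin a| := abs_nonneg _
    have hs2 : (0:ℝ) ≤ |Real.sin b| := abs_nonneg _
    rw [abs_of_nonpos (by linarith : -|Real.sin a| - |Real.sin b| ≤ 0)]
    rw [abs_of_nonpos (by linarith : a - b ≤ 0)]
    linarith
  · simp only [if_neg (not_le.2 ha), if_neg (not_le.2 hb)]
    have h := abs_abs_sub_abs_le_abs_sub (Real.sin a) (Real.sin b)
    have h2 := sin_lip a b
    have e : -|Real.sin a| - -|Real.sin b| = -(|Real.sin a| - |Real.sin b|) := by ring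
    rw [e, abs_neg]
    linarith

/-- the primitive of `msin` -/
def V2 (θ : ℝ) : ℝ := ∫ t in (0:ℝ)..θ, msin t

lemma hasDerivAt_V2 (θ : ℝ) : HasDerivAt V2 (msin θ) θ :=
  (continuous_msin.integral_hasStrictDerivAt 0 θ).hasDerivAt

lemma V2_eq {θ : ℝ} (h0 : 0 ≤ θ) (hπ : θ ≤ π) : V2 θ = 1 - Real.cos θ := by
  have : V2 θ = ∫ t in (0:ℝ)..θ, Real.sin t := by
    apply intervalIntegral.integral_congr
    intro t ht
    rw [uIcc_of_le h0] at ht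
    rw [msin_eq_abs ht.1, abs_of_nonneg (Real.sin_nonneg_of_nonneg_of_le_pi ht.1 (ht.2.trans hπ))]
  rw [this, integral_sin, Real.cos_zero]

lemma V2_add_pi {θ : ℝ} (h0 : 0 ≤ θ) : V2 (θ + π) = V2 θ + 2 := by
  have hint : ∀ a b : ℝ, IntervalIntegrable msin volume a b :=
    fun a b => continuous_msin.intervalIntegrable a b
  have hsplit : V2 θ + ∫ t in θ..(θ+π), msin t = V2 (θ + π) :=
    intervalIntegral.integral_add_adjacent_intervals (hint 0 θ) (hint θ (θ+π))
  have hper : Function.Periodic (fun x => |Real.sin x|) π := by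
    intro x; simp [Real.sin_add_pi]
  have h1 : (∫ t in θ..(θ+π), msin t) = ∫ t in θ..(θ+π), |Real.sin t| := by
    apply intervalIntegral.integral_congr
    intro t ht
    rw [uIcc_of_le (by linarith [Real.pi_pos] : θ ≤ θ + π)] at ht
    exact msin_eq_abs (le_trans h0 ht.1)
  have h2 : (∫ t in θ..(θ+π), |Real.sin t|) = ∫ t in (0:ℝ)..π, |Real.sin t| := by
    simpa using hper.intervalIntegral_add_eq θ 0
  have h3 : (∫ t in (0:ℝ)..π, |Real.sin t|) = ∫ t in (0:ℝ)..π, Real.sin t := by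
    apply intervalIntegral.integral_congr
    intro t ht
    rw [uIcc_of_le Real.pi_pos.le] at ht
    exact abs_of_nonneg (Real.sin_nonneg_of_nonneg_of_le_pi ht.1 ht.2)
  have h4 : (∫ t in (0:ℝ)..π, Real.sin t) = 2 := by
    rw [integral_sin, Real.cos_zero, Real.cos_pi]; norm_num
  rw [h1, h2, h3, h4] at hsplit
  linarith

lemma cos_sub_le {a b c : ℝ} (hab : a ≤ b) (h : ∀ t ∈ Icc a b, Real.sin t ≤ c) :
    Real.cos a - Real.cos b ≤ c * (b - a) := by
  have h1 : Real.cos a - Real.cos b = ∫ t in a..b, Real.sin t := by rw [integral_sin]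
  have h2 : (∫ t in a..b, Real.sin t) ≤ ∫ t in a..b, c := by
    apply intervalIntegral.integral_mono_on hab
      (Real.continuous_sin.intervalIntegrable a b) (intervalIntegrable_const) h
  rw [intervalIntegral.integral_const, smul_eq_mul] at h2
  rw [h1]; linarith [h2]

lemma le_cos_sub {a b c : ℝ} (hab : a ≤ b) (h : ∀ t ∈ Icc a b, c ≤ Real.sin t) :
    c * (b - a) ≤ Real.cos a - Real.cos b := by
  have h1 : Real.cos a - Real.cos b = ∫ t in a..b, Real.sin t := by rw [integral_sin]
  have h2 : (∫ t in a..b, c) ≤ ∫ t in a..b, Real.sin t := by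
    apply intervalIntegral.integral_mono_on hab (intervalIntegrable_const)
      (Real.continuous_sin.intervalIntegrable a b) h
  rw [intervalIntegral.integral_const, smul_eq_mul] at h2
  rw [h1]; linarith [h2]

section Min
variable {k : ℝ} (hk0 : 0 < k) (hk : k ≤ 1 / π)

/-- basic facts about s = 2k and θ* -/
lemma s_facts (hk0 : 0 < k) (hk : k ≤ 1 / π) :
    0 < 2 * k ∧ 2 * k < 1 ∧ Real.sin (Real.arcsin (2 * k)) = 2 * k ∧
      0 < Real.arcsin (2 * k) ∧ Real.arcsin (2 * k) < π / 2 ∧ 2 * k * π ≤ 2 := by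
  have hπ := Real.pi_pos
  have hπ3 : (3:ℝ) ≤ π := by linarith [Real.pi_gt_three]
  have hkπ : k * π ≤ 1 := by
    calc k * π ≤ (1/π) * π := mul_le_mul_of_nonneg_right hk hπ.le
      _ = 1 := by field_simp
  have hs1 : 2 * k ≤ 2 / π := by rw [le_div_iff₀ hπ]; nlinarith
  have hlt : 2 * k < 1 := lt_of_le_of_lt hs1 (by rw [div_lt_one hπ]; linarith)
  refine ⟨by linarith, hlt, Real.sin_arcsin (by linarith) hlt.le, Real.arcsin_pos.2 (by linarith),
    Real.arcsin_lt_pi_div_two.2 hlt, ?_⟩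
  calc 2 * k * π ≤ 2 / π * π := by nlinarith
    _ = 2 := by field_simp

/-- sin is at most `sin ts` on `[0, ts]`-type bound (monotone part) -/
lemma sin_mono_le {a b : ℝ} (ha : -(π/2) ≤ a) (hb : b ≤ π/2) (hab : a ≤ b) :
    Real.sin a ≤ Real.sin b :=
  Real.strictMonoOn_sin.monotoneOn ⟨ha, hab.trans hb⟩ ⟨ha.trans hab, hb⟩ hab

/-- Base case: on [0, π], `cos ts - cos θ ≥ s (θ - ts)` with `s = 2k`, `ts = arcsin s`. -/
lemma base_ineq (hk0 : 0 < k) (hk : k ≤ 1 / π) {θ : ℝ} (h0 : 0 ≤ θ) (hπθ : θ ≤ π) :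
    2 * k * (θ - Real.arcsin (2 * k)) ≤
      Real.cos (Real.arcsin (2 * k)) - Real.cos θ := by
  obtain ⟨hs0, hs1, hsin, hts0, htsπ2, hsπ⟩ := s_facts hk0 hk
  set s := 2 * k with hs
  set ts := Real.arcsin s with hts
  have hπ := Real.pi_pos
  have sin_le_on : ∀ t, 0 ≤ t → t ≤ ts → Real.sin t ≤ s := by
    intro t h1 h2
    rw [← hsin]; exact sin_mono_le (by linarith) htsπ2.le h2
  have sin_le_on' : ∀ t, π - ts ≤ t → t ≤ π → Real.sin t ≤ s := by
    intro t h1 h2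
    rw [← Real.sin_pi_sub]
    exact sin_le_on _ (by linarith) (by linarith)
  rcases le_or_gt θ ts with hc | hc
  · have h := cos_sub_le hc (fun t ht => sin_le_on t (le_trans h0 ht.1) ht.2)
    nlinarith
  · rcases le_or_gt θ (π - ts) with hc2 | hc2
    · have h := le_cos_sub hc.le (c := s) ?_
      · nlinarith
      · intro t ht
        rcases le_or_gt t (π/2) with h3 | h3
        · rw [← hsin]; exact sin_mono_le (by linarith [ht.1, hts0]) h3 ht.1
        · rw [← Real.sin_pi_sub, ← hsin]
          exact sin_mono_le (by linarith) (by linarith) (by linarith [ht.2])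
    · -- θ ∈ (π - ts, π]
      have h1 : Real.cos θ - Real.cos π ≤ s * (π - θ) := cos_sub_le hπθ
        (fun t ht => sin_le_on' t (by linarith [ht.1]) ht.2)
      have h2 : Real.cos 0 - Real.cos ts ≤ s * (ts - 0) := cos_sub_le hts0.le
        (fun t ht => sin_le_on t ht.1 ht.2)
      rw [Real.cos_zero] at h2
      rw [Real.cos_pi] at h1
      nlinarith
end Min

noncomputable def wfun (k θ : ℝ) : ℝ := V2 θ / 4 - k * θ / 2

noncomputable def Tconst (k : ℝ) : ℝ :=
  (1 - Real.cos (Real.arcsin (2 * k))) / 4 - k / 2 * Real.arcsin (2 * k)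

lemma Tconst_nonpos {k : ℝ} (hk0 : 0 < k) (hk : k ≤ 1 / π) : Tconst k ≤ 0 := by
  obtain ⟨hs0, hs1, hsin, hts0, htsπ2, hsπ⟩ := s_facts hk0 hk
  have h2 : Real.cos 0 - Real.cos (Real.arcsin (2*k)) ≤ 2 * k * (Real.arcsin (2*k) - 0) := by
    apply cos_sub_le hts0.le
    intro t ht
    rw [← hsin]
    exact sin_mono_le (by linarith [ht.1, Real.pi_pos]) htsπ2.le ht.2
  rw [Real.cos_zero] at h2
  unfold Tconst
  nlinarith

lemma wfun_ge_base {k : ℝ} (hk0 : 0 < k) (hk : k ≤ 1 / π) {θ : ℝ} (h0 : 0 ≤ θ) (hπθ : θ ≤ π) :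
    Tconst k ≤ wfun k θ := by
  obtain ⟨hs0, hs1, hsin, hts0, htsπ2, hsπ⟩ := s_facts hk0 hk
  have hb := base_ineq hk0 hk h0 hπθ
  have hπ := Real.pi_pos
  unfold wfun Tconst
  rw [V2_eq h0 hπθ]
  nlinarith

lemma wfun_ge_aux {k : ℝ} (hk0 : 0 < k) (hk : k ≤ 1 / π) :
    ∀ n : ℕ, ∀ θ : ℝ, 0 ≤ θ → θ ≤ (n + 1) * π → Tconst k ≤ wfun k θ := by
  intro n
  induction n with
  | zero => intro θ h0 hθ; exact wfun_ge_base hk0 hk h0 (by push_cast at hθ; linarith)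
  | succ m ih =>
    intro θ h0 hθ
    rcases le_or_gt θ ((m + 1) * π) with hc | hc
    · exact ih θ h0 hc
    · have hπ := Real.pi_pos
      have hmπ : π ≤ (m + 1) * π := by nlinarith [Nat.cast_nonneg (α := ℝ) m]
      have h0' : 0 ≤ θ - π := by linarith
      have hθ' : θ - π ≤ (m + 1) * π := by push_cast at hθ ⊢; linarith
      have hV := V2_add_pi h0'
      have hkπ : k * π ≤ 1 := by
        calc k * π ≤ (1/π) * π := mul_le_mul_of_nonneg_right hk hπ.le
          _ = 1 := by field_simp
      have := ih (θ - π) h0' hθ'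
      unfold wfun at this ⊢
      have he : θ - π + π = θ := by ring
      rw [he] at hV
      rw [hV]
      linarith

lemma msin_nonpos {t : ℝ} (h : t ≤ 0) : msin t ≤ 0 := by
  rcases eq_or_lt_of_le h with h' | h'
  · subst h'; rw [msin_eq_abs le_rfl]; simp
  · rw [msin_eq_neg_abs h']; simp [abs_nonneg]

lemma wfun_ge {k : ℝ} (hk0 : 0 < k) (hk : k ≤ 1 / π) (θ : ℝ) : Tconst k ≤ wfun k θ := by
  rcases le_or_gt 0 θ with h0 | h0
  · obtain ⟨n, hn⟩ := exists_nat_ge (θ / π)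
    have hπ := Real.pi_pos
    apply wfun_ge_aux hk0 hk n θ h0
    have : θ ≤ n * π := by
      rw [div_le_iff₀ hπ] at hn; linarith
    nlinarith
  · have hV : 0 ≤ V2 θ := by
      have : V2 θ = - ∫ t in θ..(0:ℝ), msin t := by
        unfold V2; rw [← intervalIntegral.integral_symm]
      rw [this, neg_nonneg]
      have hm : (∫ t in θ..(0:ℝ), msin t) ≤ ∫ t in θ..(0:ℝ), (0:ℝ) := by
        apply intervalIntegral.integral_mono_on h0.le
          (continuous_msin.intervalIntegrable _ _) intervalIntegrable_const
        intro t ht; exact msin_nonpos ht.2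
      simpa using hm
    have h1 : Tconst k ≤ 0 := Tconst_nonpos hk0 hk
    unfold wfun
    nlinarith

/-- q = w' -/
noncomputable def qfun (k θ : ℝ) : ℝ := msin θ / 4 - k / 2

lemma continuous_qfun (k : ℝ) : Continuous (qfun k) :=
  (continuous_msin.div_const 4).sub continuous_const

lemma abs_qfun_le (k θ : ℝ) (hk : 0 ≤ k) : |qfun k θ| ≤ 1/4 + k/2 := by
  unfold qfun
  have h1 := abs_msin_le θ
  have h2 := Real.abs_sin_le_one θ
  have := abs_sub (msin θ / 4) (k / 2)
  calc |msin θ / 4 - k/2| ≤ |msin θ / 4| + |k/2| := abs_sub _ _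
    _ ≤ 1/4 + k/2 := by
        rw [abs_div, abs_div, abs_of_nonneg hk]
        have : |msin θ| ≤ 1 := le_trans h1 h2
        rw [show |(4:ℝ)| = 4 by norm_num, show |(2:ℝ)| = 2 by norm_num]
        linarith
  
lemma abs_qfun_sub (k a b : ℝ) : |qfun k a - qfun k b| ≤ |a - b| / 4 := by
  unfold qfun
  have := msin_lip a b
  calc |msin a / 4 - k/2 - (msin b / 4 - k/2)| = |msin a - msin b| / 4 := by
        rw [show msin a / 4 - k/2 - (msin b / 4 - k/2) = (msin a - msin b)/4 by ring, abs_div]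
        norm_num
    _ ≤ |a - b| / 4 := by linarith

lemma hasDerivAt_wfun (k θ : ℝ) : HasDerivAt (wfun k) (qfun k θ) θ := by
  unfold wfun qfun
  have h : HasDerivAt (fun x : ℝ => k * x / 2) (k / 2) θ := by
    simpa using ((hasDerivAt_id θ).const_mul k).div_const 2
  exact ((hasDerivAt_V2 θ).div_const 4).sub h

lemma wfun_zero (k : ℝ) : wfun k 0 = 0 := by
  unfold wfun V2; rw [intervalIntegral.integral_same]; ring

/-- FTC chain rule for continuous integrand -/
lemma cont_chain (k : ℝ) (gc : ℝ → ℝ) (hgc : Continuous gc) :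
    (∫ x in (0:ℝ)..1, qfun k (∫ t in (0:ℝ)..x, gc t) * gc x)
      = wfun k (∫ t in (0:ℝ)..1, gc t) := by
  set ψ : ℝ → ℝ := fun y => ∫ t in (0:ℝ)..y, gc t with hψ
  have hd : ∀ x : ℝ, HasDerivAt ψ (gc x) x :=
    fun x => (hgc.integral_hasStrictDerivAt 0 x).hasDerivAt
  have hcψ : Continuous ψ := continuous_iff_continuousAt.2 fun x => (hd x).continuousAt
  have hcomp : ∀ x ∈ uIcc (0:ℝ) 1, HasDerivAt (fun y => wfun k (ψ y)) (qfun k (ψ x) * gc x) x :=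
    fun x _ => (hasDerivAt_wfun k (ψ x)).comp x (hd x)
  have hint : IntervalIntegrable (fun x => qfun k (ψ x) * gc x) volume 0 1 :=
    (((continuous_qfun k).comp hcψ).mul hgc).intervalIntegrable 0 1
  have heq := intervalIntegral.integral_eq_sub_of_hasDerivAt hcomp hint
  rw [heq]
  have h0 : ψ 0 = 0 := intervalIntegral.integral_same
  rw [h0, wfun_zero, sub_zero]

lemma key_integral_ge {k : ℝ} (hk0 : 0 < k) (hk : k ≤ 1 / π)
    (φ g : ℝ → ℝ) (hφ : ∀ x ∈ Icc (0:ℝ) 1, φ x = ∫ t in (0:ℝ)..x, g t)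
    (hg : IntervalIntegrable g volume 0 1) :
    Tconst k ≤ ∫ x in (0:ℝ)..1, qfun k (φ x) * g x := by
  -- continuity of φ on [0,1]
  have hu : uIcc (0:ℝ) 1 = Icc (0:ℝ) 1 := uIcc_of_le zero_le_one
  have hφc : ContinuousOn φ (Icc (0:ℝ) 1) := by
    have hp : ContinuousOn (fun b => ∫ t in (0:ℝ)..b, g t) (Icc (0:ℝ) 1) := by
      have := intervalIntegral.continuousOn_primitive_interval' hg left_mem_uIcc
      rwa [hu] at this
    exact hp.congr hφ
  have hqφ : ContinuousOn (fun x => qfun k (φ x)) (uIcc (0:ℝ) 1) := by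
    rw [hu]; exact (continuous_qfun k).comp_continuousOn hφc
  have hqg_int : IntervalIntegrable (fun x => qfun k (φ x) * g x) volume 0 1 :=
    hg.continuousOn_mul hqφ
  set A := ∫ x in (0:ℝ)..1, |g x| with hA
  have hA0 : 0 ≤ A := intervalIntegral.integral_nonneg zero_le_one (fun u _ => abs_nonneg _)
  set C := (1/4 + k/2) + (A+1)/4 with hC
  have hC0 : 0 < C := by positivity
  apply le_of_forall_pos_le_add
  intro δ hδ
  set ε := min (δ/C) 1 with hε
  have hε0 : 0 < ε := lt_min (by positivity) one_pos
  have hε1 : ε ≤ 1 := min_le_right _ _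
  have hεC : C * ε ≤ δ := by
    calc C * ε ≤ C * (δ/C) := by
          apply mul_le_mul_of_nonneg_left (min_le_left _ _) hC0.le
      _ = δ := by field_simp
  -- approximation by a continuous function
  set f := (Set.Ioc (0:ℝ) 1).indicator g with hf
  have hg_Ioc : IntegrableOn g (Set.Ioc (0:ℝ) 1) volume :=
    (intervalIntegrable_iff_integrableOn_Ioc_of_le zero_le_one).1 hg
  have hf_int : Integrable f volume := (integrable_indicator_iff measurableSet_Ioc).2 hg_Ioc
  obtain ⟨gc, hgc_supp, hgc_close, hgc_cont, hgc_int⟩ :=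
    hf_int.exists_hasCompactSupport_integral_sub_le hε0
  have hgc_ii : IntervalIntegrable gc volume 0 1 := hgc_cont.intervalIntegrable 0 1
  have hsub_int : IntervalIntegrable (fun t => g t - gc t) volume 0 1 := hg.sub hgc_ii
  -- B1
  have B1 : (∫ x in (0:ℝ)..1, |g x - gc x|) ≤ ε := by
    have e1 : (∫ x in (0:ℝ)..1, |g x - gc x|) = ∫ x in Set.Ioc (0:ℝ) 1, |g x - gc x| :=
      intervalIntegral.integral_of_le zero_le_one
    have e2 : (∫ x in Set.Ioc (0:ℝ) 1, |g x - gc x|) = ∫ x in Set.Ioc (0:ℝ) 1, ‖f x - gc x‖ := by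
      apply setIntegral_congr_fun measurableSet_Ioc
      intro x hx
      simp only [hf, Real.norm_eq_abs]
      rw [Set.indicator_of_mem hx]
    have e3 : (∫ x in Set.Ioc (0:ℝ) 1, ‖f x - gc x‖) ≤ ∫ x, ‖f x - gc x‖ :=
      setIntegral_le_integral (hf_int.sub hgc_int).norm
        (ae_of_all _ fun x => norm_nonneg _)
    rw [e1, e2]
    exact e3.trans hgc_close
  -- ψ and B2
  set ψ : ℝ → ℝ := fun y => ∫ t in (0:ℝ)..y, gc t with hψ
  have B2 : ∀ x ∈ Icc (0:ℝ) 1, |φ x - ψ x| ≤ ε := by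
    intro x hx
    have hsx : IntervalIntegrable g volume 0 x := by
      apply hg.mono_set
      rw [hu, uIcc_of_le hx.1]
      exact Icc_subset_Icc le_rfl hx.2
    have hsx2 : IntervalIntegrable gc volume 0 x := hgc_cont.intervalIntegrable 0 x
    have e1 : φ x - ψ x = ∫ t in (0:ℝ)..x, (g t - gc t) := by
      rw [hφ x hx, intervalIntegral.integral_sub hsx hsx2]
    rw [e1]
    calc |∫ t in (0:ℝ)..x, (g t - gc t)| ≤ ∫ t in (0:ℝ)..x, |g t - gc t| :=
          intervalIntegral.abs_integral_le_integral_abs hx.1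
      _ ≤ ∫ t in (0:ℝ)..1, |g t - gc t| := by
          apply intervalIntegral.integral_mono_interval le_rfl hx.1 hx.2
            (ae_of_all _ fun t => abs_nonneg _) hsub_int.abs
      _ ≤ ε := B1
  -- chain rule value
  have hchain : (∫ x in (0:ℝ)..1, qfun k (ψ x) * gc x) = wfun k (ψ 1) := by
    exact cont_chain k gc hgc_cont
  have hT : Tconst k ≤ ∫ x in (0:ℝ)..1, qfun k (ψ x) * gc x := by
    rw [hchain]; exact wfun_ge hk0 hk _
  -- integrability of q(ψ) gc
  have hcψ : Continuous ψ := continuous_iff_continuousAt.2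
    fun x => ((hgc_cont.integral_hasStrictDerivAt 0 x).hasDerivAt).continuousAt
  have hqψ_int : IntervalIntegrable (fun x => qfun k (ψ x) * gc x) volume 0 1 :=
    (((continuous_qfun k).comp hcψ).mul hgc_cont).intervalIntegrable 0 1
  -- B3 : difference bound
  have hgcA : (∫ x in (0:ℝ)..1, |gc x|) ≤ A + ε := by
    have h1 : (∫ x in (0:ℝ)..1, |gc x|) ≤ ∫ x in (0:ℝ)..1, (|g x| + |g x - gc x|) := by
      apply intervalIntegral.integral_mono_on zero_le_one
        (hgc_cont.abs.intervalIntegrable 0 1) (hg.abs.add hsub_int.abs)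
      intro x _
      calc |gc x| = |g x - (g x - gc x)| := by ring_nf
        _ ≤ |g x| + |g x - gc x| := abs_sub _ _
    rw [intervalIntegral.integral_add hg.abs hsub_int.abs] at h1
    linarith [B1]
  have B3 : |(∫ x in (0:ℝ)..1, qfun k (φ x) * g x) - ∫ x in (0:ℝ)..1, qfun k (ψ x) * gc x|
      ≤ C * ε := by
    rw [← intervalIntegral.integral_sub hqg_int hqψ_int]
    have hb : ∀ x ∈ Icc (0:ℝ) 1,
        |qfun k (φ x) * g x - qfun k (ψ x) * gc x|
          ≤ (1/4 + k/2) * |g x - gc x| + ε/4 * |gc x| := by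
      intro x hx
      have e : qfun k (φ x) * g x - qfun k (ψ x) * gc x
          = qfun k (φ x) * (g x - gc x) + (qfun k (φ x) - qfun k (ψ x)) * gc x := by ring
      rw [e]
      calc |qfun k (φ x) * (g x - gc x) + (qfun k (φ x) - qfun k (ψ x)) * gc x|
          ≤ |qfun k (φ x) * (g x - gc x)| + |(qfun k (φ x) - qfun k (ψ x)) * gc x| :=
            abs_add_le _ _
        _ = |qfun k (φ x)| * |g x - gc x| + |qfun k (φ x) - qfun k (ψ x)| * |gc x| := by
            rw [abs_mul, abs_mul]
        _ ≤ (1/4 + k/2) * |g x - gc x| + ε/4 * |gc x| := by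
            apply add_le_add
            · exact mul_le_mul_of_nonneg_right (abs_qfun_le k (φ x) hk0.le) (abs_nonneg _)
            · apply mul_le_mul_of_nonneg_right _ (abs_nonneg _)
              calc |qfun k (φ x) - qfun k (ψ x)| ≤ |φ x - ψ x| / 4 := abs_qfun_sub k _ _
                _ ≤ ε / 4 := by linarith [B2 x hx]
    calc |∫ x in (0:ℝ)..1, (qfun k (φ x) * g x - qfun k (ψ x) * gc x)|
        ≤ ∫ x in (0:ℝ)..1, |qfun k (φ x) * g x - qfun k (ψ x) * gc x| :=
          intervalIntegral.abs_integral_le_integral_abs zero_le_one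
      _ ≤ ∫ x in (0:ℝ)..1, ((1/4 + k/2) * |g x - gc x| + ε/4 * |gc x|) := by
          apply intervalIntegral.integral_mono_on zero_le_one
            (hqg_int.sub hqψ_int).abs
            ((hsub_int.abs.const_mul _).add (hgc_cont.abs.intervalIntegrable 0 1 |>.const_mul _))
            hb
      _ = (1/4 + k/2) * (∫ x in (0:ℝ)..1, |g x - gc x|) + ε/4 * ∫ x in (0:ℝ)..1, |gc x| := by
          rw [intervalIntegral.integral_add (hsub_int.abs.const_mul _)
            (hgc_cont.abs.intervalIntegrable 0 1 |>.const_mul _),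
            intervalIntegral.integral_const_mul, intervalIntegral.integral_const_mul]
      _ ≤ (1/4 + k/2) * ε + ε/4 * (A + ε) := by
          apply add_le_add
          · exact mul_le_mul_of_nonneg_left B1 (by positivity)
          · exact mul_le_mul_of_nonneg_left hgcA (by positivity)
      _ ≤ C * ε := by rw [hC]; nlinarith
  have := abs_sub_le_iff.1 B3
  linarith [hT, this.2, hεC]

lemma ptwise {k β s θ : ℝ} (hβ : 0 < β) :
    (1/β) * (qfun k θ * s) ≤ (1/8)*(s^2 + (1/β^2) * Real.sin θ^2) - (k/β/2)*s := by
  have h1 : msin θ * s ≤ |Real.sin θ| * |s| := by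
    calc msin θ * s ≤ |msin θ * s| := le_abs_self _
      _ = |msin θ| * |s| := abs_mul _ _
      _ ≤ |Real.sin θ| * |s| := mul_le_mul_of_nonneg_right (abs_msin_le θ) (abs_nonneg _)
  have h2 : 0 ≤ (|s| * β - |Real.sin θ|)^2 := sq_nonneg _
  have hss : |s|^2 = s^2 := sq_abs s
  have hsin : |Real.sin θ|^2 = Real.sin θ^2 := sq_abs _
  have key : msin θ * s * (2*β) ≤ s^2*β^2 + Real.sin θ^2 := by nlinarith
  have e : (1/8)*(s^2 + (1/β^2) * Real.sin θ^2) - (k/β/2)*s - (1/β) * (qfun k θ * s)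
      = (s^2*β^2 + Real.sin θ^2 - msin θ * s * (2*β)) / (8*β^2) := by
    unfold qfun; field_simp; ring
  linarith [div_nonneg (by linarith : (0:ℝ) ≤ s^2*β^2 + Real.sin θ^2 - msin θ * s * (2*β))
    (by positivity : (0:ℝ) ≤ 8*β^2), e.ge, e.le]

lemma Fenergy_lower {k β : ℝ} (hk0 : 0 < k) (hk : k ≤ 1/π) (hβ : 0 < β)
    (φ g : ℝ → ℝ) (hm : MemJ φ g) : Tconst k / β ≤ Fenergy β (k/β) φ g := by
  obtain ⟨hφ, hg, hg2⟩ := hm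
  have hu : uIcc (0:ℝ) 1 = Icc (0:ℝ) 1 := uIcc_of_le zero_le_one
  have hφc : ContinuousOn φ (Icc (0:ℝ) 1) := by
    have hp : ContinuousOn (fun b => ∫ t in (0:ℝ)..b, g t) (Icc (0:ℝ) 1) := by
      have := intervalIntegral.continuousOn_primitive_interval' hg left_mem_uIcc
      rwa [hu] at this
    exact hp.congr hφ
  have hsin2 : IntervalIntegrable (fun x => (1/β^2) * Real.sin (φ x)^2) volume 0 1 := by
    apply ContinuousOn.intervalIntegrable
    rw [hu]
    exact (continuousOn_const.mul (((Real.continuous_sin.comp_continuousOn hφc).pow 2)))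
  have hint1 : IntervalIntegrable (fun x => (g x)^2 + (1/β^2) * Real.sin (φ x)^2) volume 0 1 :=
    hg2.add hsin2
  have hqφ : ContinuousOn (fun x => qfun k (φ x)) (uIcc (0:ℝ) 1) := by
    rw [hu]; exact (continuous_qfun k).comp_continuousOn hφc
  have hqg_int : IntervalIntegrable (fun x => qfun k (φ x) * g x) volume 0 1 :=
    hg.continuousOn_mul hqφ
  have hmono : (∫ x in (0:ℝ)..1, (1/β) * (qfun k (φ x) * g x))
      ≤ ∫ x in (0:ℝ)..1, ((1/8)*((g x)^2 + (1/β^2) * Real.sin (φ x)^2) - (k/β/2)*(g x)) := by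
    apply intervalIntegral.integral_mono_on zero_le_one (hqg_int.const_mul _)
      ((hint1.const_mul _).sub (hg.const_mul _))
    intro x _
    exact ptwise hβ
  rw [intervalIntegral.integral_const_mul,
    intervalIntegral.integral_sub (hint1.const_mul _) (hg.const_mul _),
    intervalIntegral.integral_const_mul, intervalIntegral.integral_const_mul] at hmono
  have hkey := key_integral_ge hk0 hk φ g hφ hg
  have hβ' : 0 < 1/β := by positivity
  have h2 : Tconst k / β ≤ (1/β) * ∫ x in (0:ℝ)..1, qfun k (φ x) * g x := by
    rw [div_eq_mul_one_div, mul_comm]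
    exact mul_le_mul_of_nonneg_left hkey hβ'.le
  unfold Fenergy
  linarith

lemma sin_two_arctan (y : ℝ) : Real.sin (2 * Real.arctan y) = 2 * y / (1 + y^2) := by
  rw [two_mul, Real.sin_add, Real.sin_arctan, Real.cos_arctan]
  have h : (0:ℝ) < 1 + y^2 := by positivity
  have hs : Real.sqrt (1 + y^2) * Real.sqrt (1 + y^2) = 1 + y^2 := Real.mul_self_sqrt h.le
  have hs0 : Real.sqrt (1 + y^2) ≠ 0 := by positivity
  field_simp
  rw [Real.sq_sqrt h.le]; ring

lemma sin_sq_lip (a b : ℝ) : Real.sin a ^ 2 - Real.sin b ^ 2 ≤ 2 * |a - b| := by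
  have h1 : Real.sin a ^ 2 - Real.sin b ^ 2
      = (Real.sin a - Real.sin b) * (Real.sin a + Real.sin b) := by ring
  have h2 := sin_lip a b
  have h3 : |Real.sin a + Real.sin b| ≤ 2 := by
    have := Real.neg_one_le_sin a
    have := Real.sin_le_one a
    have := Real.neg_one_le_sin b
    have := Real.sin_le_one b
    rw [abs_le]; constructor <;> linarith
  calc Real.sin a ^ 2 - Real.sin b ^ 2
      ≤ |(Real.sin a - Real.sin b) * (Real.sin a + Real.sin b)| := by rw [← h1]; exact le_abs_self _
    _ = |Real.sin a - Real.sin b| * |Real.sin a + Real.sin b| := abs_mul _ _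
    _ ≤ |a - b| * 2 := mul_le_mul h2 h3 (abs_nonneg _) (abs_nonneg _)
    _ = 2 * |a - b| := by ring

section Upper
variable {k β : ℝ}

lemma upper_bound (hk0 : 0 < k) (hk : k ≤ 1/π) (hβ : 0 < β) :
    ∃ φ g : ℝ → ℝ, MemJ φ g ∧
      Fenergy β (k/β) φ g ≤ Tconst k / β + 2 * Real.exp (-(1/β)) * (k/(2*β) + 1/(4*β^2)) := by
  have hπ := Real.pi_pos
  have hkπ : k * π ≤ 1 := by
    calc k * π ≤ (1/π) * π := mul_le_mul_of_nonneg_right hk hπ.le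
      _ = 1 := by field_simp
  have hs1 : 2 * k < 1 := by nlinarith [Real.pi_gt_three]
  set ts := Real.arcsin (2*k) with hts
  have hts0 : 0 < ts := Real.arcsin_pos.2 (by linarith)
  have htsπ2 : ts < π/2 := Real.arcsin_lt_pi_div_two.2 hs1
  have htan_pos : 0 < Real.tan (ts/2) :=
    Real.tan_pos_of_pos_of_lt_pi_div_two (by linarith) (by linarith)
  have htan_le : Real.tan (ts/2) ≤ 1 := by
    rw [← Real.tan_pi_div_four]
    rcases lt_or_ge (ts/2) (π/4) with h | h
    · exact (Real.tan_lt_tan_of_nonneg_of_lt_pi_div_two (by linarith) (by linarith) h).le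
    · have : ts/2 = π/4 := le_antisymm (by linarith) h
      rw [this]
  set c := Real.tan (ts/2) * Real.exp (-(1/β)) with hc
  have hc0 : 0 < c := by positivity
  set φβ : ℝ → ℝ := fun x => 2 * Real.arctan (c * Real.exp (x/β)) with hφβ
  set gβ : ℝ → ℝ := fun x => Real.sin (φβ x) / β with hgβ
  -- derivative
  have hderiv : ∀ x : ℝ, HasDerivAt φβ (gβ x) x := by
    intro x
    have h1 : HasDerivAt (fun x : ℝ => x/β) (1/β) x := (hasDerivAt_id x).div_const β
    have h2 : HasDerivAt (fun x : ℝ => Real.exp (x/β)) (Real.exp (x/β) * (1/β)) x :=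
      by have := (Real.hasDerivAt_exp (x/β)).comp x h1; exact this
    have h3 : HasDerivAt (fun x : ℝ => c * Real.exp (x/β)) (c * (Real.exp (x/β) * (1/β))) x :=
      h2.const_mul c
    have h4 : HasDerivAt (fun x : ℝ => Real.arctan (c * Real.exp (x/β)))
        ((1/(1 + (c * Real.exp (x/β))^2)) * (c * (Real.exp (x/β) * (1/β)))) x :=
      by have := (Real.hasDerivAt_arctan (c * Real.exp (x/β))).comp x h3; exact this
    have h5 := h4.const_mul 2
    refine h5.congr_deriv (Eq.symm ?_)
    rw [hgβ]
    show Real.sin (φβ x) / β = _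
    rw [hφβ]
    show Real.sin (2 * Real.arctan (c * Real.exp (x/β))) / β = _
    rw [sin_two_arctan]
    have hpos : (0:ℝ) < 1 + (c * Real.exp (x/β))^2 := by positivity
    field_simp
  have hφβcont : Continuous φβ := continuous_iff_continuousAt.2 fun x => (hderiv x).continuousAt
  have hgβcont : Continuous gβ := (Real.continuous_sin.comp hφβcont).div_const β
  set ψ : ℝ → ℝ := fun x => φβ x - φβ 0 with hψ
  have hMemJ : MemJ ψ gβ := by
    refine ⟨?_, hgβcont.intervalIntegrable 0 1, (hgβcont.pow 2).intervalIntegrable 0 1⟩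
    intro x hx
    have h := intervalIntegral.integral_eq_sub_of_hasDerivAt (f := φβ) (f' := gβ)
      (fun t _ => hderiv t) (hgβcont.intervalIntegrable 0 x)
    exact h.symm
  -- endpoint values
  have hval1 : φβ 1 = ts := by
    show 2 * Real.arctan (c * Real.exp (1/β)) = ts
    have he : c * Real.exp (1/β) = Real.tan (ts/2) := by
      rw [hc, mul_assoc, ← Real.exp_add]; simp
    rw [he, Real.arctan_tan (by linarith) (by linarith)]
    ring
  have hval0pos : 0 < φβ 0 := by
    have : 0 < Real.arctan (c * Real.exp (0/β)) := by
      rw [← Real.arctan_zero]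
      exact Real.arctan_strictMono (by positivity)

    show 0 < 2 * Real.arctan (c * Real.exp (0/β))
    linarith
  have hval0le : φβ 0 ≤ 2 * Real.exp (-(1/β)) := by
    show 2 * Real.arctan (c * Real.exp (0/β)) ≤ _
    have he : c * Real.exp (0/β) = c := by norm_num
    rw [he]
    have h1 : Real.arctan c ≤ c := by
      have h2 : 0 < Real.arctan c := by
        rw [← Real.arctan_zero]; exact Real.arctan_strictMono hc0
      have h3 := Real.lt_tan h2 (Real.arctan_lt_pi_div_two c)
      rw [Real.tan_arctan] at h3
      exact h3.le
    have h4 : c ≤ Real.exp (-(1/β)) := by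
      rw [hc]
      nlinarith [Real.exp_pos (-(1/β))]
    linarith
  -- FTC evaluations
  have hI_g : (∫ x in (0:ℝ)..1, gβ x) = φβ 1 - φβ 0 :=
    intervalIntegral.integral_eq_sub_of_hasDerivAt (fun t _ => hderiv t)
      (hgβcont.intervalIntegrable 0 1)
  have hI_sin : (∫ x in (0:ℝ)..1, Real.sin (φβ x) * gβ x)
      = Real.cos (φβ 0) - Real.cos (φβ 1) := by
    have hd : ∀ t ∈ uIcc (0:ℝ) 1,
        HasDerivAt (fun y => -Real.cos (φβ y)) (Real.sin (φβ t) * gβ t) t := by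
      intro t _
      have h1 := ((Real.hasDerivAt_cos (φβ t)).comp t (hderiv t)).neg
      refine h1.congr_deriv ?_
      ring
    have h := intervalIntegral.integral_eq_sub_of_hasDerivAt hd
      (((Real.continuous_sin.comp hφβcont).mul hgβcont).intervalIntegrable 0 1)
    rw [h]; ring
  -- pointwise energy bound
  have hmono : (∫ x in (0:ℝ)..1, ((gβ x)^2 + (1/β^2) * Real.sin (ψ x)^2))
      ≤ ∫ x in (0:ℝ)..1, ((2/β) * (Real.sin (φβ x) * gβ x) + 2*(φβ 0)/β^2) := by
    apply intervalIntegral.integral_mono_on zero_le_one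
    · exact (by fun_prop : Continuous fun x => (gβ x)^2 + (1/β^2) * Real.sin (ψ x)^2).intervalIntegrable 0 1
    · exact (by fun_prop : Continuous fun x => (2/β) * (Real.sin (φβ x) * gβ x) + 2*(φβ 0)/β^2).intervalIntegrable 0 1
    · intro x _
      have h1 : Real.sin (ψ x)^2 ≤ Real.sin (φβ x)^2 + 2*(φβ 0) := by
        have h2 := sin_sq_lip (ψ x) (φβ x)
        have he : |ψ x - φβ x| = φβ 0 := by
          show |φβ x - φβ 0 - φβ x| = φβ 0
          rw [show φβ x - φβ 0 - φβ x = -(φβ 0) by ring, abs_neg, abs_of_pos hval0pos]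
        rw [he] at h2
        linarith
      have h2 : (gβ x)^2 = Real.sin (φβ x)^2/β^2 := by
        show (Real.sin (φβ x)/β)^2 = _
        rw [div_pow]
      have h3 : Real.sin (φβ x) * gβ x = Real.sin (φβ x)^2/β := by
        show Real.sin (φβ x) * (Real.sin (φβ x)/β) = _
        ring
      rw [h2, h3]
      have expand : 2 / β * (Real.sin (φβ x)^2/β) = 2 * (Real.sin (φβ x)^2/β^2) := by
        field_simp
      rw [expand]
      have h6 : (1:ℝ)/β^2 * Real.sin (ψ x)^2 ≤ 1/β^2 * (Real.sin (φβ x)^2 + 2*(φβ 0)) :=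
        mul_le_mul_of_nonneg_left h1 (by positivity)
      have e : 2 * (Real.sin (φβ x)^2/β^2) + 2*(φβ 0)/β^2
          = Real.sin (φβ x)^2/β^2 + 1/β^2 * (Real.sin (φβ x)^2 + 2*(φβ 0)) := by ring
      rw [e]
      linarith [h6]
  -- assemble
  refine ⟨ψ, gβ, hMemJ, ?_⟩
  have hIrhs : (∫ x in (0:ℝ)..1, ((2/β) * (Real.sin (φβ x) * gβ x) + 2*(φβ 0)/β^2))
      = (2/β) * (Real.cos (φβ 0) - Real.cos (φβ 1)) + 2*(φβ 0)/β^2 := by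
    rw [intervalIntegral.integral_add
      ((by fun_prop : Continuous fun x => (2/β) * (Real.sin (φβ x) * gβ x)).intervalIntegrable 0 1)
      (intervalIntegrable_const),
      intervalIntegral.integral_const_mul, hI_sin, intervalIntegral.integral_const]
    simp
  unfold Fenergy
  rw [hI_g, hval1]
  have hcos1 : Real.cos (φβ 0) ≤ 1 := Real.cos_le_one _
  have hcoef : (0:ℝ) ≤ k/(2*β) + 1/(4*β^2) := by positivity
  have hmul : φβ 0 * (k/(2*β) + 1/(4*β^2)) ≤ 2 * Real.exp (-(1/β)) * (k/(2*β) + 1/(4*β^2)) :=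
    mul_le_mul_of_nonneg_right hval0le hcoef
  have hfin : (1/8 : ℝ) * (∫ x in (0:ℝ)..1, ((gβ x)^2 + (1/β^2) * Real.sin (ψ x)^2))
      ≤ (1/8) * ((2/β) * (Real.cos (φβ 0) - Real.cos ts) + 2*(φβ 0)/β^2) := by
    rw [← hval1, ← hIrhs]
    linarith [hmono]
  have hTc : Tconst k / β = ((1 - Real.cos ts)/4 - k/2*ts)/β := by rw [hts]; rfl
  rw [hTc]
  have hgoal : (1/8) * ((2/β) * (Real.cos (φβ 0) - Real.cos ts) + 2*(φβ 0)/β^2)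
      - (k/β/2) * (ts - φβ 0)
      ≤ ((1 - Real.cos ts)/4 - k/2*ts)/β + 2 * Real.exp (-(1/β)) * (k/(2*β) + 1/(4*β^2)) := by
    have e1 : (1/8) * ((2/β) * (Real.cos (φβ 0) - Real.cos ts) + 2*(φβ 0)/β^2)
        - (k/β/2) * (ts - φβ 0)
        = (Real.cos (φβ 0) - Real.cos ts)/(4*β) + (φβ 0)/(4*β^2) - k*ts/(2*β)
          + (φβ 0) * (k/(2*β)) := by
      field_simp; ring
    have e2 : ((1 - Real.cos ts)/4 - k/2*ts)/β = (1 - Real.cos ts)/(4*β) - k*ts/(2*β) := by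
      field_simp
    rw [e1, e2]
    have e3 : (Real.cos (φβ 0) - Real.cos ts)/(4*β) ≤ (1 - Real.cos ts)/(4*β) := by
      have h4β : (0:ℝ) < 4*β := by positivity
      exact (div_le_div_iff_of_pos_right h4β).2 (by linarith)
    have e4 : (φβ 0)/(4*β^2) + (φβ 0) * (k/(2*β)) = φβ 0 * (k/(2*β) + 1/(4*β^2)) := by
      field_simp; ring
    linarith [hmul, e4]
  linarith [hfin, hgoal]
end Upper

lemma MemJ_zero : MemJ (fun _ => (0:ℝ)) (fun _ => (0:ℝ)) := by
  refine ⟨fun x _ => by simp, ?_, ?_⟩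
  · simpa using intervalIntegrable_const (μ := volume) (c := (0:ℝ)) (a := 0) (b := 1)
  · simpa using intervalIntegrable_const (μ := volume) (c := (0:ℝ)) (a := 0) (b := 1)

lemma minF_ge {k β : ℝ} (hk0 : 0 < k) (hk : k ≤ 1/π) (hβ : 0 < β) :
    Tconst k / β ≤ minF β (k/β) := by
  apply le_csInf
  · exact ⟨Fenergy β (k/β) (fun _ => 0) (fun _ => 0), ⟨_, _, MemJ_zero, rfl⟩⟩
  · rintro E ⟨φ, g, hm, rfl⟩
    exact Fenergy_lower hk0 hk hβ φ g hm

lemma minF_le {k β : ℝ} (hk0 : 0 < k) (hk : k ≤ 1/π) (hβ : 0 < β) :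
    minF β (k/β) ≤ Tconst k / β + 2 * Real.exp (-(1/β)) * (k/(2*β) + 1/(4*β^2)) := by
  obtain ⟨φ, g, hm, hF⟩ := upper_bound hk0 hk hβ
  have hbdd : BddBelow {E : ℝ | ∃ φ g : ℝ → ℝ, MemJ φ g ∧ Fenergy β (k/β) φ g = E} := by
    refine ⟨Tconst k / β, ?_⟩
    rintro E ⟨φ', g', hm', rfl⟩
    exact Fenergy_lower hk0 hk hβ φ' g' hm'
  exact le_trans (csInf_le hbdd ⟨φ, g, hm, rfl⟩) hF


/-- Fix `κ̃` with `0 < κ̃ ≤ 1/π`.  For `β > 0` set `κ = κ̃/β` and let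
`m(β) = inf_J F_{β,κ}`.  Then for every `n ∈ ℕ`,
`β⁻ⁿ (m(β) − (1/β)[(1 − √(1 − 4κ̃²))/4 − (κ̃/2) arcsin(2κ̃)]) → 0` as `β → 0⁺`. -/
theorem stmt1 (κt : ℝ) (h1 : 0 < κt) (h2 : κt ≤ 1 / π) (n : ℕ) :
    Tendsto (fun β : ℝ =>
        (minF β (κt / β) -
            (1 / β) * ((1 - Real.sqrt (1 - 4 * κt ^ 2)) / 4 -
              (κt / 2) * Real.arcsin (2 * κt))) / β ^ n)
      (𝓝[>] (0:ℝ)) (𝓝 0) := by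
  have hconst : (1 - Real.sqrt (1 - 4 * κt ^ 2)) / 4 - (κt / 2) * Real.arcsin (2 * κt)
      = Tconst κt := by
    unfold Tconst
    rw [Real.cos_arcsin]
    norm_num
    ring_nf
  have hG : Tendsto (fun β : ℝ => 2*(κt+1) * ((β⁻¹)^(n+2) * Real.exp (-β⁻¹)))
      (𝓝[>] (0:ℝ)) (𝓝 0) := by
    have h := (tendsto_pow_mul_exp_neg_atTop_nhds_zero (n+2)).comp tendsto_inv_nhdsGT_zero
    have h2 := h.const_mul (2*(κt+1))
    simpa using h2
  apply squeeze_zero' (g := fun β : ℝ => 2*(κt+1) * ((β⁻¹)^(n+2) * Real.exp (-β⁻¹)))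
    ?_ ?_ hG
  · filter_upwards [Ioo_mem_nhdsGT_of_mem (show (0:ℝ) ∈ Ico (0:ℝ) 1 by simp)] with β hβ
    rw [hconst]
    have hβ0 := hβ.1
    have hlow := minF_ge h1 h2 hβ0
    have hpow : (0:ℝ) < β^n := pow_pos hβ0 n
    apply div_nonneg _ hpow.le
    have e : (1/β) * Tconst κt = Tconst κt / β := by ring
    linarith
  · filter_upwards [Ioo_mem_nhdsGT_of_mem (show (0:ℝ) ∈ Ico (0:ℝ) 1 by simp)] with β hβ
    obtain ⟨hβ0, hβ1⟩ := hβ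
    rw [hconst]
    have hup := minF_le h1 h2 hβ0
    have hpow : (0:ℝ) < β^n := pow_pos hβ0 n
    have h3 : κt/(2*β) + 1/(4*β^2) ≤ (κt+1) * (β⁻¹)^2 := by
      have hb : (0:ℝ) < β^2 := by positivity
      rw [inv_pow, inv_eq_one_div, mul_one_div]
      rw [div_add_div _ _ (by positivity : (2*β) ≠ 0) (by positivity : (4*β^2) ≠ 0)]
      rw [div_le_div_iff₀ (by positivity) hb]
      nlinarith [mul_nonneg (mul_nonneg h1.le (pow_pos hβ0 3).le) (sub_nonneg.2 hβ1.le),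
        pow_pos hβ0 3, h1.le, hβ0.le]
    have hnum : minF β (κt/β) - (1/β) * Tconst κt
        ≤ 2 * Real.exp (-(1/β)) * ((κt+1) * (β⁻¹)^2) := by
      have hexp : (0:ℝ) ≤ 2 * Real.exp (-(1/β)) := by positivity
      have e : (1/β) * Tconst κt = Tconst κt / β := by ring
      nlinarith [hup, mul_le_mul_of_nonneg_left h3 hexp]
    calc (minF β (κt/β) - (1/β)*Tconst κt)/β^n
        ≤ (2 * Real.exp (-(1/β)) * ((κt+1) * (β⁻¹)^2))/β^n :=
          (div_le_div_iff_of_pos_right hpow).2 hnum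
      _ = 2*(κt+1) * ((β⁻¹)^(n+2) * Real.exp (-β⁻¹)) := by
          rw [div_eq_mul_inv, ← inv_pow, pow_add, one_div]
          ring
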